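/- arXiv:1709.05877 — 2 statements merged into one kernel-verified Lean document; each statement's English description precedes it below -/
import Mathlib

section
/- Let p₁, p₂ be two distinct points on the round 2-sphere S²(ρ) of radius ρ ≤ 1, let D = d(p₁,p₂) be their intrinsic distance, and suppose t₁', t₂' ∈ (D/2, min{3D/2, πρ − D/2}). Then the set S(p₁,p₂; t₁', t₂') = {x ∈ S²(ρ) : d(x,p₁) = t₁' and d(x,p₂) = t₂'} consists of exactly two points. -/
open Real

/-- The intrinsic (geodesic) distance on the round sphere of radius `ρ` in `ℝ³`. -/
noncomputable def gdist (ρ : ℝ) (x y : EuclideanSpace ℝ (Fin 3)) : ℝ :=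
  ρ * Real.arccos ((inner ℝ x y : ℝ) / ρ^2)

set_option maxHeartbeats 1000000
open Real RealInnerProductSpace

noncomputable def cross3 (u v : EuclideanSpace ℝ (Fin 3)) : EuclideanSpace ℝ (Fin 3) :=
  WithLp.toLp 2 ![u 1 * v 2 - u 2 * v 1, u 2 * v 0 - u 0 * v 2, u 0 * v 1 - u 1 * v 0]

lemma inner3 (x y : EuclideanSpace ℝ (Fin 3)) : ⟪x, y⟫ = x 0 * y 0 + x 1 * y 1 + x 2 * y 2 := by
  simp [PiLp.inner_apply, RCLike.inner_apply, Fin.sum_univ_three]; ring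

lemma cross3_inner_left (u v : EuclideanSpace ℝ (Fin 3)) : ⟪cross3 u v, u⟫ = 0 := by
  simp only [inner3]; simp [cross3, Fin.sum_univ_three]; ring

lemma cross3_inner_right (u v : EuclideanSpace ℝ (Fin 3)) : ⟪cross3 u v, v⟫ = 0 := by
  simp only [inner3]; simp [cross3, Fin.sum_univ_three]; ring

lemma cross3_self (u v : EuclideanSpace ℝ (Fin 3)) :
    ⟪cross3 u v, cross3 u v⟫ = ⟪u, u⟫ * ⟪v, v⟫ - ⟪u, v⟫ ^ 2 := by
  simp only [inner3]; simp [cross3, Fin.sum_univ_three]; ring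

lemma lagrange3 (u v z : EuclideanSpace ℝ (Fin 3)) :
    ⟪z, cross3 u v⟫ ^ 2 =
      ⟪z, z⟫ * (⟪u, u⟫ * ⟪v, v⟫ - ⟪u, v⟫ ^ 2) - ⟪z, u⟫ ^ 2 * ⟪v, v⟫
        + 2 * ⟪z, u⟫ * ⟪z, v⟫ * ⟪u, v⟫ - ⟪z, v⟫ ^ 2 * ⟪u, u⟫ := by
  simp only [inner3]; simp [cross3, Fin.sum_univ_three]; ring

lemma keyineq (a b c s₁ s₂ : ℝ) (h1 : s₁^2 = 1 - a^2) (h2 : s₂^2 = 1 - b^2)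
    (hprod : 0 < (c - (a*b - s₁*s₂)) * ((a*b + s₁*s₂) - c)) :
    0 < 1 - c^2 - a^2 - b^2 + 2*a*b*c := by
  have heq : (c - (a*b - s₁*s₂)) * ((a*b + s₁*s₂) - c) = 1 - c^2 - a^2 - b^2 + 2*a*b*c := by
    linear_combination s₂^2 * h1 + (1 - a^2) * h2
  rw [heq] at hprod
  exact hprod

lemma unique3 (u v z z' : EuclideanSpace ℝ (Fin 3))
    (hN : 0 < ⟪u, u⟫ * ⟪v, v⟫ - ⟪u, v⟫ ^ 2)
    (h1 : ⟪z, u⟫ = ⟪z', u⟫) (h2 : ⟪z, v⟫ = ⟪z', v⟫)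
    (h3 : ⟪z, cross3 u v⟫ = ⟪z', cross3 u v⟫) : z = z' := by
  have e1 : ⟪z - z', u⟫ = 0 := by rw [inner_sub_left, h1, sub_self]
  have e2 : ⟪z - z', v⟫ = 0 := by rw [inner_sub_left, h2, sub_self]
  have e3 : ⟪z - z', cross3 u v⟫ = 0 := by rw [inner_sub_left, h3, sub_self]
  have e4 := lagrange3 u v (z - z')
  rw [e1, e2, e3] at e4
  have e5 : ⟪z - z', z - z'⟫ * (⟪u, u⟫ * ⟪v, v⟫ - ⟪u, v⟫ ^ 2) = 0 := by linarith [e4]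
  have e6 : ⟪z - z', z - z'⟫ = 0 := by
    rcases mul_eq_zero.1 e5 with h | h
    · exact h
    · exact absurd h (ne_of_gt hN)
  exact sub_eq_zero.1 (inner_self_eq_zero.1 e6)

/-- on the round `2`-sphere of radius `ρ ≤ 1`, for distinct points `p₁,p₂`
at intrinsic distance `D` and radii `t₁', t₂' ∈ (D/2, min (3D/2) (πρ - D/2))`, the set
`S(p₁,p₂; t₁', t₂')` consists of exactly two points. -/
theorem sphere_circle_intersection_two_points (ρ : ℝ) (hρ0 : 0 < ρ) (hρ : ρ ≤ 1)
    (p₁ p₂ : EuclideanSpace ℝ (Fin 3)) (hp₁ : ‖p₁‖ = ρ) (hp₂ : ‖p₂‖ = ρ)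
    (hne : p₁ ≠ p₂) (t₁ t₂ : ℝ)
    (ht₁ : t₁ ∈ Set.Ioo (gdist ρ p₁ p₂ / 2)
      (min (3 * gdist ρ p₁ p₂ / 2) (π * ρ - gdist ρ p₁ p₂ / 2)))
    (ht₂ : t₂ ∈ Set.Ioo (gdist ρ p₁ p₂ / 2)
      (min (3 * gdist ρ p₁ p₂ / 2) (π * ρ - gdist ρ p₁ p₂ / 2))) :
    ∃ x y : EuclideanSpace ℝ (Fin 3), x ≠ y ∧
      {z : EuclideanSpace ℝ (Fin 3) | ‖z‖ = ρ ∧ gdist ρ z p₁ = t₁ ∧ gdist ρ z p₂ = t₂}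
        = {x, y} := by
  obtain ⟨ht₁l, ht₁r⟩ := ht₁
  obtain ⟨ht₂l, ht₂r⟩ := ht₂
  have hρ2 : (0:ℝ) < ρ^2 := by positivity
  set P : ℝ := ⟪p₁, p₂⟫ with hPdef
  have hU : ⟪p₁, p₁⟫ = ρ^2 := by rw [real_inner_self_eq_norm_sq, hp₁]
  have hV : ⟪p₂, p₂⟫ = ρ^2 := by rw [real_inner_self_eq_norm_sq, hp₂]
  have hPle : |P| ≤ ρ^2 := by
    have h := abs_real_inner_le_norm p₁ p₂
    rw [hp₁, hp₂, ← sq] at h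
    exact h
  have hPlt : P < ρ^2 := by
    rcases lt_or_eq_of_le (abs_le.1 hPle).2 with h | h
    · exact h
    · exfalso
      have h2 : ‖p₂‖ • p₁ = ‖p₁‖ • p₂ :=
        inner_eq_norm_mul_iff_real.1 (by rw [hp₁, hp₂, ← hPdef, h]; ring)
      rw [hp₁, hp₂] at h2
      exact hne (smul_right_injective _ (ne_of_gt hρ0) h2)
  set c : ℝ := P / ρ^2 with hcdef
  have hc1 : c < 1 := (div_lt_one hρ2).2 hPlt
  have hcge : -1 ≤ c := by
    rw [hcdef, le_div_iff₀ hρ2]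
    linarith [(abs_le.1 hPle).1]
  have hP : P = c * ρ^2 := by rw [hcdef]; field_simp
  set φ := Real.arccos c with hφdef
  have hφpos : 0 < φ := arccos_pos.2 hc1
  have hφle : φ ≤ π := arccos_le_pi c
  have hD : gdist ρ p₁ p₂ = ρ * φ := by rw [gdist, hφdef, hcdef, hPdef]
  rw [hD] at ht₁l ht₁r ht₂l ht₂r
  have ht₁r3 : t₁ < 3 * (ρ * φ) / 2 := lt_of_lt_of_le ht₁r (min_le_left _ _)
  have ht₁rπ : t₁ < π * ρ - ρ * φ / 2 := lt_of_lt_of_le ht₁r (min_le_right _ _)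
  have ht₂r3 : t₂ < 3 * (ρ * φ) / 2 := lt_of_lt_of_le ht₂r (min_le_left _ _)
  have ht₂rπ : t₂ < π * ρ - ρ * φ / 2 := lt_of_lt_of_le ht₂r (min_le_right _ _)
  have hφπ : φ < π := by
    have h : ρ * φ < ρ * π := by linarith
    exact lt_of_mul_lt_mul_left h hρ0.le
  have hcgt : -1 < c := by
    rcases lt_or_eq_of_le hcge with h | h
    · exact h
    · exfalso
      have : φ = π := by rw [hφdef, ← h, Real.arccos_neg_one]
      linarith
  have h1c : (0:ℝ) < 1 - c^2 := by
    have h : (1:ℝ) - c^2 = (1 - c) * (1 + c) := by ring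
    rw [h]
    exact mul_pos (by linarith) (by linarith)
  -- bounds for the angles
  have hθ₁l : φ/2 < t₁/ρ := by rw [lt_div_iff₀ hρ0]; linarith
  have hθ₁r3 : t₁/ρ < 3*φ/2 := by rw [div_lt_iff₀ hρ0]; linarith
  have hθ₁rπ : t₁/ρ < π - φ/2 := by rw [div_lt_iff₀ hρ0, sub_mul]; linarith
  have hθ₂l : φ/2 < t₂/ρ := by rw [lt_div_iff₀ hρ0]; linarith
  have hθ₂r3 : t₂/ρ < 3*φ/2 := by rw [div_lt_iff₀ hρ0]; linarith
  have hθ₂rπ : t₂/ρ < π - φ/2 := by rw [div_lt_iff₀ hρ0, sub_mul]; linarith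
  have hθ₁0 : 0 < t₁/ρ := by linarith
  have hθ₁π : t₁/ρ < π := by linarith
  have hθ₂0 : 0 < t₂/ρ := by linarith
  have hθ₂π : t₂/ρ < π := by linarith
  set a := Real.cos (t₁/ρ) with ha
  set b := Real.cos (t₂/ρ) with hb
  have hcosφ : Real.cos φ = c := Real.cos_arccos hcge hc1.le
  have f1 : Real.cos (t₁/ρ + t₂/ρ) < c := by
    rcases le_or_gt (t₁/ρ + t₂/ρ) π with h | h
    · rw [← hcosφ]
      exact Real.cos_lt_cos_of_nonneg_of_le_pi hφpos.le h (by linarith)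
    · have h2 : Real.cos (t₁/ρ + t₂/ρ) = Real.cos (2*π - (t₁/ρ + t₂/ρ)) := by
        rw [Real.cos_sub, Real.cos_two_pi, Real.sin_two_pi]; ring
      rw [h2, ← hcosφ]
      exact Real.cos_lt_cos_of_nonneg_of_le_pi hφpos.le (by linarith) (by linarith)
  have f2 : c < Real.cos (t₁/ρ - t₂/ρ) := by
    rw [← Real.cos_abs, ← hcosφ]
    exact Real.cos_lt_cos_of_nonneg_of_le_pi (abs_nonneg _) hφle
      (abs_lt.2 ⟨by linarith, by linarith⟩)
  have hs1 : Real.sin (t₁/ρ)^2 = 1 - a^2 := by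
    have h := Real.sin_sq_add_cos_sq (t₁/ρ); rw [← ha] at h; linarith
  have hs2 : Real.sin (t₂/ρ)^2 = 1 - b^2 := by
    have h := Real.sin_sq_add_cos_sq (t₂/ρ); rw [← hb] at h; linarith
  have hK : 0 < 1 - c^2 - a^2 - b^2 + 2*a*b*c := by
    have hprod : 0 < (c - Real.cos (t₁/ρ + t₂/ρ)) * (Real.cos (t₁/ρ - t₂/ρ) - c) :=
      mul_pos (by linarith) (by linarith)
    rw [Real.cos_add, Real.cos_sub, ← ha, ← hb] at hprod
    exact keyineq a b c _ _ hs1 hs2 hprod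
  -- the cross product
  set n := cross3 p₁ p₂ with hndef
  have hnu : ⟪n, p₁⟫ = 0 := cross3_inner_left p₁ p₂
  have hnv : ⟪n, p₂⟫ = 0 := cross3_inner_right p₁ p₂
  have hun : ⟪p₁, n⟫ = 0 := by rw [real_inner_comm]; exact hnu
  have hvn : ⟪p₂, n⟫ = 0 := by rw [real_inner_comm]; exact hnv
  have hVU : ⟪p₂, p₁⟫ = P := by rw [real_inner_comm]
  have hNn : ⟪n, n⟫ = ρ^4 * (1 - c^2) := by
    rw [hndef, cross3_self, hU, hV, ← hPdef, hP]; ring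
  have hNpos : 0 < ⟪n, n⟫ := by
    rw [hNn]; exact mul_pos (by positivity) h1c
  set α := (a - b*c)/(1 - c^2) with hα
  set β := (b - a*c)/(1 - c^2) with hβ
  set γ := Real.sqrt (1 - c^2 - a^2 - b^2 + 2*a*b*c) / (ρ * (1 - c^2)) with hγ
  have hγpos : 0 < γ := by
    rw [hγ]
    exact div_pos (Real.sqrt_pos.2 hK) (mul_pos hρ0 h1c)
  have hγ2 : γ^2 = (1 - c^2 - a^2 - b^2 + 2*a*b*c) / (ρ^2 * (1 - c^2)^2) := by
    rw [hγ, div_pow, Real.sq_sqrt hK.le]; ring_nf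
  have hinner1 : ∀ g : ℝ, ⟪α•p₁+β•p₂+g•n, p₁⟫ = ρ^2 * a := by
    intro g
    rw [inner_add_left, inner_add_left, real_inner_smul_left, real_inner_smul_left,
      real_inner_smul_left, hU, hVU, hnu, hα, hβ, hP]
    field_simp
    ring
  have hinner2 : ∀ g : ℝ, ⟪α•p₁+β•p₂+g•n, p₂⟫ = ρ^2 * b := by
    intro g
    rw [inner_add_left, inner_add_left, real_inner_smul_left, real_inner_smul_left,
      real_inner_smul_left, hV, ← hPdef, hnv, hα, hβ, hP]
    field_simp
    ring
  have hinner3 : ∀ g : ℝ, ⟪α•p₁+β•p₂+g•n, n⟫ = g * (ρ^4 * (1 - c^2)) := by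
    intro g
    rw [inner_add_left, inner_add_left, real_inner_smul_left, real_inner_smul_left,
      real_inner_smul_left, hun, hvn, hNn]
    ring
  have hnorm : ∀ g : ℝ, g^2 = γ^2 → ⟪α•p₁+β•p₂+g•n, α•p₁+β•p₂+g•n⟫ = ρ^2 := by
    intro g hg
    rw [inner_add_right, inner_add_right, real_inner_smul_right, real_inner_smul_right,
      real_inner_smul_right, hinner1, hinner2, hinner3 g]
    have : g * (g * (ρ^4 * (1 - c^2))) = γ^2 * (ρ^4 * (1-c^2)) := by
      rw [← hg]; ring
    rw [this, hγ2, hα, hβ]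
    field_simp
    ring
  -- conversion between gdist equations and inner product equations
  have key : ∀ (z q : EuclideanSpace ℝ (Fin 3)) (t : ℝ), ‖z‖ = ρ → ‖q‖ = ρ →
      0 < t/ρ → t/ρ < π → (gdist ρ z q = t ↔ ⟪z, q⟫ = ρ^2 * Real.cos (t/ρ)) := by
    intro z q t hz hq ht0 htπ
    rw [gdist]
    constructor
    · intro h
      have harc : Real.arccos (⟪z, q⟫/ρ^2) = t/ρ := by
        rw [eq_div_iff (ne_of_gt hρ0)]; linarith [h]
      have hbnd : |⟪z, q⟫| ≤ ρ^2 := by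
        have h2 := abs_real_inner_le_norm z q
        rw [hz, hq, ← sq] at h2
        exact h2
      have hc := Real.cos_arccos (x := ⟪z, q⟫/ρ^2)
        (by rw [le_div_iff₀ hρ2]; linarith [(abs_le.1 hbnd).1])
        (by rw [div_le_one hρ2]; exact (abs_le.1 hbnd).2)
      rw [harc] at hc
      rw [eq_div_iff (ne_of_gt hρ2)] at hc
      linarith [hc]
    · intro h
      rw [h]
      have h3 : ρ^2 * Real.cos (t/ρ) / ρ^2 = Real.cos (t/ρ) := by field_simp
      rw [h3, Real.arccos_cos ht0.le htπ.le]
      field_simp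
  have hNgram : 0 < ⟪p₁, p₁⟫ * ⟪p₂, p₂⟫ - ⟪p₁, p₂⟫ ^ 2 := by
    have h : ρ^2*ρ^2 - (c*ρ^2)^2 = ρ^4 * (1 - c^2) := by ring
    rw [hU, hV, ← hPdef, hP, h]
    exact mul_pos (by positivity) h1c
  refine ⟨α•p₁+β•p₂+γ•n, α•p₁+β•p₂+(-γ)•n, ?_, ?_⟩
  · intro h
    have h2 := congrArg (fun w : EuclideanSpace ℝ (Fin 3) => ⟪w, n⟫) h
    simp only [hinner3] at h2
    have h3 : 0 < γ * (ρ^4 * (1 - c^2)) := mul_pos hγpos (mul_pos (by positivity) h1c)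
    linarith [h2, h3]
  · ext z
    simp only [Set.mem_setOf_eq, Set.mem_insert_iff, Set.mem_singleton_iff]
    constructor
    · rintro ⟨hz, hz1, hz2⟩
      have hzu := (key z p₁ t₁ hz hp₁ hθ₁0 hθ₁π).1 hz1
      have hzv := (key z p₂ t₂ hz hp₂ hθ₂0 hθ₂π).1 hz2
      rw [← ha] at hzu
      rw [← hb] at hzv
      have hzz : ⟪z, z⟫ = ρ^2 := by rw [real_inner_self_eq_norm_sq, hz]
      have hlag := lagrange3 p₁ p₂ z
      rw [← hndef, hzz, hzu, hzv, hU, hV, ← hPdef, hP] at hlag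
      have hval : ⟪z, n⟫^2 = (γ * (ρ^4 * (1 - c^2)))^2 := by
        rw [hlag, show (γ * (ρ^4*(1-c^2)))^2 = γ^2 * (ρ^4*(1-c^2))^2 from by ring, hγ2]
        field_simp
        ring
      have hfac : (⟪z, n⟫ - γ * (ρ^4 * (1 - c^2))) * (⟪z, n⟫ + γ * (ρ^4 * (1 - c^2))) = 0 := by
        linear_combination hval
      rcases mul_eq_zero.1 hfac with h | h
      · left
        refine unique3 p₁ p₂ z _ hNgram ?_ ?_ ?_
        · rw [hzu, hinner1 γ]
        · rw [hzv, hinner2 γ]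
        · rw [← hndef, hinner3 γ]; linarith [h]
      · right
        refine unique3 p₁ p₂ z _ hNgram ?_ ?_ ?_
        · rw [hzu, hinner1 (-γ)]
        · rw [hzv, hinner2 (-γ)]
        · rw [← hndef, hinner3 (-γ)]; linarith [h]
    · have hmem : ∀ g : ℝ, g^2 = γ^2 → ‖α•p₁+β•p₂+g•n‖ = ρ ∧
          gdist ρ (α•p₁+β•p₂+g•n) p₁ = t₁ ∧ gdist ρ (α•p₁+β•p₂+g•n) p₂ = t₂ := by
        intro g hg
        have hnx : ‖α•p₁+β•p₂+g•n‖ = ρ := by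
          have h1 : ‖α•p₁+β•p₂+g•n‖^2 = ρ^2 := by
            rw [← real_inner_self_eq_norm_sq, hnorm g hg]
          calc ‖α•p₁+β•p₂+g•n‖ = √(‖α•p₁+β•p₂+g•n‖^2) := (Real.sqrt_sq (norm_nonneg _)).symm
            _ = √(ρ^2) := by rw [h1]
            _ = ρ := Real.sqrt_sq hρ0.le
        refine ⟨hnx, ?_, ?_⟩
        · exact (key _ p₁ t₁ hnx hp₁ hθ₁0 hθ₁π).2 (by rw [hinner1 g, ha])
        · exact (key _ p₂ t₂ hnx hp₂ hθ₂0 hθ₂π).2 (by rw [hinner2 g, hb])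
      rintro (rfl | rfl)
      · exact hmem γ rfl
      · exact hmem (-γ) (by ring)
end

section
/- Let X ⊂ ℝ³ be the union of the xy-plane and the nonnegative part of the yz-plane, with the induced intrinsic metric d. Let p = (x₀,y₀,0) be a point of the xy-plane with x₀ ≠ 0, let r > |x₀|, and let p₁ = (x₀ + r·x₀/|x₀|, y₀, 0). Then for any point q on the yz-plane part of the sphere S(p;r) (i.e., q = (0, y, z) with z > 0 and d(q,p) = r), one has d(q, p₁) ≥ sqrt(2r² + 2r|x₀|). -/
open Real

/-- in the union `X ⊂ ℝ³` of the `xy`-plane and the nonnegative part of the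
`yz`-plane with the intrinsic metric `d` (given by the unfolding formula below for pairs
consisting of a point of the `xy`-plane off the `y`-axis and a point of the nonnegative
`yz`-plane), for `p = (x₀,y₀,0)` with `x₀ ≠ 0`, `r > |x₀|`, and
`p₁ = (x₀ + r x₀/|x₀|, y₀, 0)`, every point `q = (0,y,z)` (`z > 0`) of `S(p;r)` satisfies
`d(q,p₁) ≥ sqrt(2r² + 2r|x₀|)`. -/
theorem dist_to_far_center_ge
    (d : ℝ × ℝ × ℝ → ℝ × ℝ × ℝ → ℝ)
    (hsymm : ∀ a b, d a b = d b a)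
    (hunfold : ∀ x y₀ y z : ℝ, x ≠ 0 → 0 ≤ z →
      d (x, y₀, 0) (0, y, z) = Real.sqrt ((|x| + z)^2 + (y - y₀)^2))
    (x₀ y₀ r : ℝ) (hx₀ : x₀ ≠ 0) (hr : |x₀| < r) :
    ∀ y z : ℝ, 0 < z → d (0, y, z) (x₀, y₀, 0) = r →
      Real.sqrt (2*r^2 + 2*r*|x₀|) ≤ d (0, y, z) (x₀ + r*x₀/|x₀|, y₀, 0) := by

  intro y z hz hq
  have habs : 0 < |x₀| := abs_pos.mpr hx₀
  set s := x₀ + r*x₀/|x₀| with hs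
  have hrpos : 0 < r := lt_trans habs hr
  have hcase : s = x₀ + r ∨ s = x₀ - r := by
    rcases abs_cases x₀ with ⟨h1,h2⟩|⟨h1,h2⟩
    · left; rw [hs, h1, mul_div_assoc, div_self hx₀, mul_one]
    · right; rw [hs, h1, div_neg, mul_div_assoc, div_self hx₀]; ring
  have hxx : x₀ < 0 ∨ 0 < x₀ := hx₀.lt_or_gt
  have hsne : s ≠ 0 := by
    rcases hcase with h|h <;> rcases hxx with hx|hx <;>
      rcases abs_cases x₀ with ⟨h1,h2⟩|⟨h1,h2⟩ <;> rw [h] <;> intro hc <;> linarith [hr]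
  have hsabs : |s| = |x₀| + r := by
    rcases hcase with h|h <;> rcases abs_cases x₀ with ⟨h1,h2⟩|⟨h1,h2⟩
    · rw [h, abs_of_pos (by linarith), h1]
    · exfalso; rw [h] at hs
      have : r*x₀/|x₀| = -r := by rw [h1, div_neg, mul_div_assoc, div_self hx₀]; ring
      rw [this] at hs; linarith [hrpos]
    · exfalso; rw [h] at hs
      have : r*x₀/|x₀| = r := by rw [h1, mul_div_assoc, div_self hx₀, mul_one]
      rw [this] at hs; linarith [hrpos]
    · rw [h, abs_of_neg (by linarith), h1]; ring
  rw [hsymm] at hq ⊢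
  rw [hunfold x₀ y₀ y z hx₀ hz.le] at hq
  rw [hunfold s y₀ y z hsne hz.le, hsabs]
  have key : (|x₀| + z)^2 + (y - y₀)^2 = r^2 := by
    have h1 : Real.sqrt ((|x₀| + z)^2 + (y - y₀)^2) ^ 2 = r^2 := by rw [hq]
    rwa [Real.sq_sqrt (by positivity)] at h1
  apply Real.sqrt_le_sqrt
  nlinarith [habs, hz, sq_nonneg (y - y₀)]
end
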